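/- A graded sequence $\{p_n\}$ is $W$-Sheffer if and only if for every $h \in \mathbb{F}$ the operator $T_{h,W}$ multiplies the formal series $\sum_n p_n(x)y^n/w_n \in \mathbb{F}[x][[y]]$ by a power series in $y$ that is independent of $x$. -/

import Mathlib

open Polynomial


lemma aux_li {F : Type*} [Field F] (p : ℕ → F[X]) (hp : ∀ n, (p n).degree = n) :
    LinearIndependent F p := by
  rw [linearIndependent_iff']
  intro s
  induction s using Finset.strongInduction with
  | _ s ih =>
    intro g hsum i hi
    have hne : s.Nonempty := ⟨i, hi⟩
    set m := s.max' hne with hmdef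
    have hgm : g m = 0 := by
      have hc := congrArg (fun q => Polynomial.coeff q m) hsum
      simp only [finset_sum_coeff, coeff_smul, coeff_zero, smul_eq_mul] at hc
      rw [Finset.sum_eq_single m] at hc
      · have hpm : (p m).coeff m ≠ 0 := coeff_ne_zero_of_eq_degree (hp m)
        exact (mul_eq_zero.1 hc).resolve_right hpm
      · intro j hj hjm
        have hjlt : j < m := lt_of_le_of_ne (s.le_max' j hj) hjm
        have : (p j).coeff m = 0 := coeff_eq_zero_of_degree_lt (by rw [hp j]; exact_mod_cast hjlt)
        rw [this, mul_zero]
      · intro hms; exact absurd (s.max'_mem hne) hms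
    have hmem : m ∈ s := s.max'_mem hne
    have hsum' : ∑ j ∈ s.erase m, g j • p j = 0 := by
      rw [← Finset.add_sum_erase s _ hmem] at hsum
      rwa [hgm, zero_smul, zero_add] at hsum
    rcases eq_or_ne i m with rfl | hne'
    · exact hgm
    · exact ih (s.erase m) (Finset.erase_ssubset hmem) g hsum' i (Finset.mem_erase.2 ⟨hne', hi⟩)

lemma aux_span {F : Type*} [Field F] (p : ℕ → F[X]) (hp : ∀ n, (p n).degree = n) :
    ∀ (n : ℕ) (q : F[X]), q.degree < (n : WithBot ℕ) → q ∈ Submodule.span F (p '' Set.Iio n) := by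
  intro n
  induction n with
  | zero =>
    intro q hq
    have : q = 0 := by
      rw [← degree_eq_bot]
      exact Nat.WithBot.lt_zero_iff.1 (by exact_mod_cast hq)
    simp [this]
  | succ n ihn =>
    intro q hq
    set c := q.coeff n / (p n).coeff n with hc
    have hpn : (p n).coeff n ≠ 0 := coeff_ne_zero_of_eq_degree (hp n)
    have hq' : (q - c • p n).degree < (n : WithBot ℕ) := by
      rw [degree_lt_iff_coeff_zero]
      intro m hm
      rcases eq_or_lt_of_le hm with hm' | hm'
      · have hmn : m = n := by exact_mod_cast hm'.symm
        subst hmn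
        simp only [coeff_sub, coeff_smul, smul_eq_mul, hc]
        field_simp
        ring
      · have hmn : n < m := by exact_mod_cast hm'
        have h1 : q.coeff m = 0 := coeff_eq_zero_of_degree_lt
          (lt_of_lt_of_le hq (by exact_mod_cast Nat.succ_le_of_lt hmn))
        have h2 : (p n).coeff m = 0 := coeff_eq_zero_of_degree_lt (by rw [hp n]; exact_mod_cast hmn)
        simp [h1, h2]
    have hmem := ihn _ hq'
    have hmono : Submodule.span F (p '' Set.Iio n) ≤ Submodule.span F (p '' Set.Iio (n+1)) :=
      Submodule.span_mono (Set.image_mono (fun x hx => lt_trans hx (Nat.lt_succ_self n)))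
    have hpn' : p n ∈ Submodule.span F (p '' Set.Iio (n+1)) :=
      Submodule.subset_span ⟨n, Nat.lt_succ_self n, rfl⟩
    have := Submodule.add_mem _ (hmono hmem) (Submodule.smul_mem _ c hpn')
    simpa using this


lemma aux_Tmem {F : Type*} [Field F] (w : ℕ → F)
    (T : F → F[X] →ₗ[F] F[X])
    (hT : ∀ (h : F) (n : ℕ), T h (X ^ n) =
      ∑ k ∈ Finset.range (n + 1),
        (w n * h ^ (n - k) / (w (n - k) * w k)) • (X : F[X]) ^ k)
    (h : F) (n : ℕ) {q : F[X]} (hq : q ∈ degreeLT F (n+1)) :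
    T h q ∈ degreeLT F (n+1) := by
  classical
  have hsp : degreeLT F (n+1) ≤ (degreeLT F (n+1)).comap (T h) := by
    nth_rewrite 1 [degreeLT_eq_span_X_pow]
    rw [Submodule.span_le]
    rintro x hx
    simp only [Finset.coe_image, Set.mem_image, Finset.mem_coe, Finset.mem_range] at hx
    obtain ⟨m, hm, rfl⟩ := hx
    simp only [SetLike.mem_coe, Submodule.mem_comap, hT]
    apply Submodule.sum_mem
    intro k hk
    apply Submodule.smul_mem
    apply mem_degreeLT.2
    rw [degree_X_pow]
    have : k < n + 1 := lt_of_lt_of_le (Finset.mem_range.1 hk) hm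
    exact_mod_cast this
  exact hsp hq

/-- A graded sequence `{pₙ}` is `W`-Sheffer iff for every `h` the translation
`T_{h,W}`, applied coefficientwise to `∑ₙ pₙ(x) yⁿ/wₙ`, multiplies this series
by a power series `g(y)` independent of `x`: coefficientwise,
`T h (pₙ)/wₙ = ∑_{k ≤ n} (coeff_{n-k} g) · pₖ/wₖ`. -/
theorem stmt6 {F : Type*} [Field F] (w : ℕ → F) (hw0 : w 0 = 1)
    (hw : ∀ n, w n ≠ 0)
    (p : ℕ → F[X]) (hp : ∀ n, (p n).degree = n)
    (Q : F[X] →ₗ[F] F[X]) (hQ0 : Q (p 0) = 0)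
    (hQ : ∀ n : ℕ, Q (p (n + 1)) = (w (n + 1) / w n) • p n)
    (T : F → F[X] →ₗ[F] F[X])
    (hT : ∀ (h : F) (n : ℕ), T h (X ^ n) =
      ∑ k ∈ Finset.range (n + 1),
        (w n * h ^ (n - k) / (w (n - k) * w k)) • (X : F[X]) ^ k) :
    (∀ h : F, Q ∘ₗ T h = T h ∘ₗ Q) ↔
      (∀ h : F, ∃ g : PowerSeries F, ∀ n : ℕ,
        (w n)⁻¹ • (T h) (p n) =
          ∑ k ∈ Finset.range (n + 1),
            (PowerSeries.coeff (n - k) g) • ((w k)⁻¹ • p k)) := by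
  classical
  have li : LinearIndependent F p := aux_li p hp
  have hspan : ⊤ ≤ Submodule.span F (Set.range p) := by
    intro q _
    have hdeg : q.degree < ((q.natDegree + 1 : ℕ) : WithBot ℕ) :=
      lt_of_le_of_lt degree_le_natDegree (by exact_mod_cast Nat.lt_succ_self _)
    exact Submodule.span_mono (Set.image_subset_range p _) (aux_span p hp _ q hdeg)
  let B : Module.Basis ℕ F F[X] := Module.Basis.mk li hspan
  have hB : ∀ n, B n = p n := fun n => Module.Basis.mk_apply li hspan n
  constructor
  · intro hcomm h
    set r : ℕ → ℕ → F := fun n k => B.repr (T h (p n)) k with hrdef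
    have hsupp : ∀ n, ↑(B.repr (T h (p n))).support ⊆ Set.Iio (n+1) := by
      intro n
      apply B.repr_support_subset_of_mem_span
      have hmem : T h (p n) ∈ degreeLT F (n+1) :=
        aux_Tmem w T hT h n (mem_degreeLT.2 (by rw [hp n]; exact_mod_cast Nat.lt_succ_self n))
      have h2 := aux_span p hp (n+1) _ (mem_degreeLT.1 hmem)
      have himg : p '' Set.Iio (n+1) = ⇑B '' Set.Iio (n+1) := by rw [Module.Basis.coe_mk]
      rwa [himg] at h2
    have hrep : ∀ n, T h (p n) = ∑ k ∈ Finset.range (n+1), r n k • p k := by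
      intro n
      have hss : (B.repr (T h (p n))).support ⊆ Finset.range (n+1) := by
        intro k hk
        have := hsupp n (Finset.mem_coe.2 hk)
        simpa [Finset.mem_range, Set.mem_Iio] using this
      have h1 := B.linearCombination_repr (T h (p n))
      rw [Finsupp.linearCombination_apply, Finsupp.sum_of_support_subset _ hss _ (by intros; simp)] at h1
      rw [← h1]
      exact Finset.sum_congr rfl (fun k _ => by rw [hB])
    have hrec : ∀ m k, k ≤ m → r (m+1) (k+1) * (w (k+1) / w k) = w (m+1) / w m * r m k := by
      intro m k hk
      have hc : Q (T h (p (m+1))) = T h (Q (p (m+1))) := by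
        have := LinearMap.ext_iff.1 (hcomm h) (p (m+1))
        simpa using this
      rw [hrep (m+1), map_sum, hQ m, map_smul, hrep m, Finset.smul_sum,
        Finset.sum_range_succ'] at hc
      simp only [map_smul, hQ0, smul_zero, add_zero, hQ, smul_smul] at hc
      have hsum0 : ∑ i ∈ Finset.range (m+1),
          (r (m+1) (i+1) * (w (i+1) / w i) - w (m+1) / w m * r m i) • p i = 0 := by
        simp only [sub_smul, Finset.sum_sub_distrib]
        rw [sub_eq_zero]
        exact hc
      have h3 := linearIndependent_iff'.1 li (Finset.range (m+1))
        (fun i => r (m+1) (i+1) * (w (i+1) / w i) - w (m+1) / w m * r m i) hsum0 k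
        (Finset.mem_range.2 (Nat.lt_succ_of_le hk))
      exact sub_eq_zero.1 h3
    have key : ∀ k n, k ≤ n → r n k * w k / w n = r (n-k) 0 / w (n-k) := by
      intro k
      induction k with
      | zero => intro n _; simp [hw0]
      | succ k ihk =>
        intro n hkn
        obtain ⟨m, rfl⟩ : ∃ m, n = m + 1 := ⟨n - 1, by omega⟩
        have hkm : k ≤ m := by omega
        have h1 := hrec m k hkm
        have h2 : r (m+1) (k+1) * w (k+1) / w (m+1) = r m k * w k / w m := by
          have hwk := hw k
          have hwk1 := hw (k+1)
          have hwm := hw m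
          have hwm1 := hw (m+1)
          field_simp at h1 ⊢
          linear_combination h1
        rw [Nat.succ_sub_succ, h2]
        exact ihk m hkm
    refine ⟨PowerSeries.mk (fun j => r j 0 / w j), fun n => ?_⟩
    rw [hrep n, Finset.smul_sum]
    refine Finset.sum_congr rfl (fun k hk => ?_)
    have hkn : k ≤ n := Nat.lt_succ_iff.1 (Finset.mem_range.1 hk)
    rw [PowerSeries.coeff_mk, smul_smul, smul_smul, ← key k n hkn]
    congr 1
    have hwk := hw k
    have hwn := hw n
    field_simp
  · intro hg h
    obtain ⟨g, hgs⟩ := hg h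
    have hgs' : ∀ n, T h (p n) = w n •
        ∑ k ∈ Finset.range (n+1), (PowerSeries.coeff (n-k) g) • ((w k)⁻¹ • p k) := by
      intro n
      rw [← hgs n, smul_smul, mul_inv_cancel₀ (hw n), one_smul]
    apply Module.Basis.ext B
    intro n
    simp only [LinearMap.comp_apply, hB]
    cases n with
    | zero =>
      rw [hQ0, map_zero, hgs' 0, map_smul, map_sum]
      simp [Finset.sum_range_one, hQ0]
    | succ n =>
      rw [hQ n, map_smul, hgs' (n+1), map_smul, map_sum]
      have hterm : ∀ i ∈ Finset.range (n+1),
          Q ((PowerSeries.coeff (n+1-(i+1)) g) • ((w (i+1))⁻¹ • p (i+1)))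
            = (PowerSeries.coeff (n-i) g) • ((w i)⁻¹ • p i) := by
        intro i _
        rw [map_smul, map_smul, hQ i, Nat.succ_sub_succ]
        congr 1
        rw [smul_smul]
        congr 1
        rw [div_eq_mul_inv, ← mul_assoc, inv_mul_cancel₀ (hw (i+1)), one_mul]
      calc (w (n+1)) • ∑ k ∈ Finset.range (n+2),
              Q ((PowerSeries.coeff (n+1-k) g) • ((w k)⁻¹ • p k))
          = (w (n+1)) • (∑ i ∈ Finset.range (n+1),
              Q ((PowerSeries.coeff (n+1-(i+1)) g) • ((w (i+1))⁻¹ • p (i+1)))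
              + Q ((PowerSeries.coeff (n+1-0) g) • ((w 0)⁻¹ • p 0))) := by
            rw [Finset.sum_range_succ']
        _ = (w (n+1)) • ∑ i ∈ Finset.range (n+1),
              (PowerSeries.coeff (n-i) g) • ((w i)⁻¹ • p i) := by
            rw [Finset.sum_congr rfl hterm]
            simp [hQ0]
        _ = (w (n+1)) • ((w n)⁻¹ • T h (p n)) := by rw [hgs n]
        _ = (w (n+1) / w n) • T h (p n) := by
            rw [smul_smul, div_eq_mul_inv]
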